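/- For every symmetric 3-tensor T on ℝ^p it holds E[(T(γ) − 3⟨M,γ⟩)²] = 6‖T‖_Fr², where γ is a standard Gaussian vector and ⟨·,·⟩ is the Euclidean inner product on ℝ^p. -/

import Mathlib

open MeasureTheory ProbabilityTheory Finset


open MeasureTheory ProbabilityTheory Finset Real Filter
open scoped ENNReal NNReal

noncomputable def gm (k : ℕ) : ℝ := ∫ x, x ^ k ∂(gaussianReal 0 1)

lemma integrable_pow_exp (k : ℕ) :
    Integrable (fun x : ℝ => x ^ k * Real.exp (-(1/2 : ℝ) * x ^ 2)) := by
  have h : (-1:ℝ) < (k:ℝ) := by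
    have := Nat.cast_nonneg (α := ℝ) k; linarith
  simpa [Real.rpow_natCast] using
    integrable_rpow_mul_exp_neg_mul_sq (b := (1/2:ℝ)) (by norm_num) h

lemma integral_deriv_zero (g g' : ℝ → ℝ) (hd : ∀ x, HasDerivAt g (g' x) x)
    (hi : Integrable g') (hl : Tendsto g (Filter.cocompact ℝ) (nhds 0)) :
    ∫ x, g' x = 0 := by
  have h1 : Tendsto (fun R : ℝ => ∫ x in (-R)..R, g' x) atTop (nhds (∫ x, g' x)) :=
    intervalIntegral_tendsto_integral hi tendsto_neg_atTop_atBot tendsto_id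
  have h2 : ∀ R : ℝ, ∫ x in (-R)..R, g' x = g R - g (-R) := fun R =>
    intervalIntegral.integral_eq_sub_of_hasDerivAt (fun x _ => hd x)
      hi.intervalIntegrable
  rw [cocompact_eq_atBot_atTop] at hl
  have hT : Tendsto g atTop (nhds 0) := hl.mono_left le_sup_right
  have hB : Tendsto (fun R : ℝ => g (-R)) atTop (nhds 0) :=
    (hl.mono_left le_sup_left).comp tendsto_neg_atTop_atBot
  have h3 : Tendsto (fun R : ℝ => g R - g (-R)) atTop (nhds 0) := by
    simpa using hT.sub hB
  simp_rw [h2] at h1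
  exact tendsto_nhds_unique h1 h3

lemma tendsto_pow_exp_cocompact (m : ℕ) :
    Tendsto (fun x : ℝ => x ^ m * Real.exp (-(1/2:ℝ) * x ^ 2)) (Filter.cocompact ℝ) (nhds 0) := by
  refine squeeze_zero_norm (fun x => ?_)
    (tendsto_rpow_abs_mul_exp_neg_mul_sq_cocompact (a := (1/2:ℝ)) (by norm_num) (m:ℝ))
  rw [Real.rpow_natCast]
  simp [abs_mul, abs_pow, abs_of_nonneg (Real.exp_nonneg _), le_refl]

lemma gauss_rec_exp (k : ℕ) :
    ∫ x : ℝ, x ^ (k+2) * Real.exp (-(1/2:ℝ) * x ^ 2)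
      = (k+1 : ℝ) * ∫ x : ℝ, x ^ k * Real.exp (-(1/2:ℝ) * x ^ 2) := by
  set E : ℝ → ℝ := fun x => Real.exp (-(1/2:ℝ) * x ^ 2) with hE
  have hd : ∀ x : ℝ, HasDerivAt (fun x => x ^ (k+1) * E x)
      ((k+1 : ℝ) * x ^ k * E x - x ^ (k+2) * E x) x := by
    intro x
    have h1 : HasDerivAt (fun x : ℝ => x ^ (k+1)) ((k+1 : ℝ) * x ^ k) x := by
      simpa using hasDerivAt_pow (k+1) x
    have h2 : HasDerivAt E (E x * (-(1/2:ℝ) * (2 * x))) x := by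
      simpa [hE] using (((hasDerivAt_pow 2 x).const_mul (-(1/2:ℝ))).exp)
    have := h1.mul h2
    refine this.congr_deriv ?_
    ring
  have hi : Integrable (fun x : ℝ =>
      (k+1 : ℝ) * x ^ k * E x - x ^ (k+2) * E x) := by
    have := ((integrable_pow_exp k).const_mul (k+1 : ℝ)).sub (integrable_pow_exp (k+2))
    simpa [hE, mul_assoc, Pi.sub_def] using this
  have hz := integral_deriv_zero _ _ hd hi ?_
  · have hsub := integral_sub ((integrable_pow_exp k).const_mul (k+1 : ℝ))
      (integrable_pow_exp (k+2))
    rw [show (fun x : ℝ => (k+1 : ℝ) * x ^ k * E x - x ^ (k+2) * E x)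
        = fun x : ℝ => ((k+1 : ℝ) * (x ^ k * E x)) - x ^ (k+2) * E x from
      funext fun x => by ring] at hz
    rw [hsub] at hz
    rw [MeasureTheory.integral_const_mul] at hz
    linarith [hz]
  · simpa [hE] using tendsto_pow_exp_cocompact (k+1)

lemma gauss_odd_exp : ∫ x : ℝ, x * Real.exp (-(1/2:ℝ) * x ^ 2) = 0 := by
  apply integral_deriv_zero (fun x => -Real.exp (-(1/2:ℝ) * x ^ 2))
  · intro x
    have h2 : HasDerivAt (fun x : ℝ => Real.exp (-(1/2:ℝ) * x ^ 2))
        (Real.exp (-(1/2:ℝ) * x ^ 2) * (-(1/2:ℝ) * (2 * x))) x := by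
      simpa using (((hasDerivAt_pow 2 x).const_mul (-(1/2:ℝ))).exp)
    refine h2.neg.congr_deriv ?_
    ring
  · simpa using integrable_pow_exp 1
  · simpa using (tendsto_pow_exp_cocompact 0).neg

lemma gaussianPDFReal_eq (x : ℝ) :
    gaussianPDFReal 0 1 x = (√(2*π))⁻¹ * Real.exp (-(1/2:ℝ) * x ^ 2) := by
  rw [gaussianPDFReal]
  have h1 : -(x-(0:ℝ))^2/(2*((1:ℝ≥0):ℝ)) = -(1/2:ℝ)*x^2 := by
    push_cast; ring
  rw [h1]
  norm_num

lemma gauss_density :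
    gaussianReal 0 1
      = (volume : Measure ℝ).withDensity
          (fun x => ((gaussianPDFReal 0 1 x).toNNReal : ℝ≥0∞)) := by
  rw [gaussianReal_of_var_ne_zero 0 one_ne_zero]
  rfl

lemma gauss_transfer (f : ℝ → ℝ) :
    ∫ x, f x ∂(gaussianReal 0 1)
      = (√(2*π))⁻¹ * ∫ x, f x * Real.exp (-(1/2:ℝ) * x ^ 2) := by
  rw [gauss_density, integral_withDensity_eq_integral_smul
    ((measurable_gaussianPDFReal 0 1).real_toNNReal)]
  rw [← MeasureTheory.integral_const_mul]
  congr 1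
  funext x
  rw [NNReal.smul_def, smul_eq_mul,
    Real.coe_toNNReal _ (gaussianPDFReal_nonneg 0 1 x), gaussianPDFReal_eq]
  ring

lemma gm_zero : gm 0 = 1 := by simp [gm]

lemma gm_one : gm 1 = 0 := by
  rw [gm, gauss_transfer]
  simp only [pow_one]
  rw [gauss_odd_exp, mul_zero]

lemma gm_rec (k : ℕ) : gm (k+2) = (k+1 : ℝ) * gm k := by
  rw [gm, gm, gauss_transfer, gauss_transfer, gauss_rec_exp]
  ring

lemma gm_odd (k : ℕ) : gm (2*k+1) = 0 := by
  induction k with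
  | zero => simpa using gm_one
  | succ n ih =>
      have : 2*(n+1)+1 = (2*n+1)+2 := by ring
      rw [this, gm_rec, ih, mul_zero]

lemma integrable_pow_gauss (k : ℕ) :
    Integrable (fun x : ℝ => x ^ k) (gaussianReal 0 1) := by
  rw [gauss_density, integrable_withDensity_iff_integrable_smul
    ((measurable_gaussianPDFReal 0 1).real_toNNReal)]
  have h := (integrable_pow_exp k).const_mul ((√(2*π))⁻¹)
  apply h.congr
  apply Filter.Eventually.of_forall
  intro x
  show _ = (gaussianPDFReal 0 1 x).toNNReal • x ^ k
  rw [NNReal.smul_def, smul_eq_mul,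
    Real.coe_toNNReal _ (gaussianPDFReal_nonneg 0 1 x), gaussianPDFReal_eq]
  ring

section PiProd

variable {μ : Measure ℝ} [SigmaFinite μ]

theorem integrable_pi_prod {n : ℕ}
    {f : Fin n → ℝ → ℝ} (hf : ∀ i, Integrable (f i) μ) :
    Integrable (fun x : Fin n → ℝ => ∏ i, f i (x i)) (Measure.pi fun _ => μ) := by
  induction n with
  | zero =>
      simp only [Finset.univ_eq_empty, Finset.prod_empty]
      have : IsProbabilityMeasure (Measure.pi fun _ : Fin 0 => μ) := by
        constructor
        simp [Measure.pi_empty_univ]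
      exact integrable_const _
  | succ n n_ih =>
      have h := ((measurePreserving_piFinSuccAbove (fun _ : Fin (n+1) => μ) 0).symm)
      rw [← h.integrable_comp_emb (MeasurableEquiv.measurableEmbedding _)]
      simp_rw [MeasurableEquiv.piFinSuccAbove_symm_apply, Fin.insertNthEquiv,
        Fin.prod_univ_succ, Fin.insertNth_zero]
      simp only [Fin.zero_succAbove, Function.comp_def, Fin.cons_zero, Fin.cons_succ]
      have h2 : Integrable (fun (x : Fin n → ℝ) ↦ ∏ j, f (Fin.succ j) (x j))
          (Measure.pi fun _ => μ) :=
        n_ih (fun i ↦ hf _)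
      exact Integrable.mul_prod (hf 0) h2

theorem integral_pi_prod {n : ℕ} (f : Fin n → ℝ → ℝ) :
    ∫ x : Fin n → ℝ, ∏ i, f i (x i) ∂(Measure.pi fun _ => μ)
      = ∏ i, ∫ x, f i x ∂μ := by
  induction n with
  | zero =>
      have : IsProbabilityMeasure (Measure.pi fun _ : Fin 0 => μ) := by
        constructor
        simp [Measure.pi_empty_univ]
      simp
  | succ n n_ih =>
      calc
        _ = ∫ x : ℝ × (Fin n → ℝ),
            f 0 x.1 * ∏ i : Fin n, f (Fin.succ i) (x.2 i)
            ∂(μ.prod (Measure.pi fun _ => μ)) := by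
          rw [← ((measurePreserving_piFinSuccAbove
            (fun _ : Fin (n+1) => μ) 0).symm).integral_comp']
          simp only [MeasurableEquiv.piFinSuccAbove_symm_apply, Fin.insertNthEquiv,
            Fin.prod_univ_succ, Fin.insertNth_zero, Equiv.coe_fn_mk, Fin.cons_succ,
            Fin.zero_succAbove, Fin.cons_zero, Function.comp_def, cast_eq]
        _ = (∫ x, f 0 x ∂μ) * ∏ i : Fin n, ∫ x, f (Fin.succ i) x ∂μ := by
          rw [← n_ih, ← integral_prod_mul]
        _ = ∏ i, ∫ x, f i x ∂μ := by rw [Fin.prod_univ_succ]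

end PiProd

section Comb

variable {p : ℕ}

def dl (a : Fin p) : Fin p → ℕ := fun s => if s = a then 1 else 0

noncomputable def DD (a b : Fin p) : ℝ := if a = b then 1 else 0

noncomputable def W (c : Fin p → ℕ) : ℝ := ∏ s, gm (c s)

lemma W_zero_fun : W (fun _ : Fin p => 0) = 1 := by
  simp [W, gm_zero]

lemma Wodd (c : Fin p → ℕ) (a : Fin p) (k : ℕ) (h : c a = 2*k+1) : W c = 0 :=
  Finset.prod_eq_zero (Finset.mem_univ a) (by rw [h]; exact gm_odd k)

lemma PULL (a : Fin p) (c c' : Fin p → ℕ)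
    (h : ∀ s, c' s = dl a s + (dl a s + c s)) :
    W c' = (c a + 1 : ℝ) * W c := by
  have hfun : c' = fun s => dl a s + (dl a s + c s) := funext h
  subst hfun
  rw [W, W, ← Finset.mul_prod_erase _ _ (Finset.mem_univ a),
      ← Finset.mul_prod_erase _ (fun s => gm (c s)) (Finset.mem_univ a)]
  have h1 : ∀ s ∈ Finset.univ.erase a,
      gm (dl a s + (dl a s + c s)) = gm (c s) := by
    intro s hs
    have hne : s ≠ a := Finset.ne_of_mem_erase hs
    simp [dl, hne]
  rw [Finset.prod_congr rfl h1]
  have h2 : dl a a + (dl a a + c a) = c a + 2 := by simp [dl]; ring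
  rw [h2, gm_rec]
  push_cast
  ring

lemma W2 (a b : Fin p) : W (fun s => dl a s + dl b s) = DD a b := by
  by_cases hb : b = a
  · simp only [hb]
    rw [PULL a (fun _ => 0) _ (fun s => by ring), W_zero_fun]
    simp [DD]
  · rw [Wodd _ a 0 (by simp [dl, Ne.symm hb])]
    simp [DD, Ne.symm hb]

lemma W4 (a b c d : Fin p) :
    W (fun s => dl a s + dl b s + dl c s + dl d s)
      = DD a b * W (fun s => dl c s + dl d s)
      + DD a c * W (fun s => dl b s + dl d s)
      + DD a d * W (fun s => dl b s + dl c s) := by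
  by_cases hb : b = a
  · -- b = a
    by_cases hc : c = a
    · -- c = a
      by_cases hd : d = a
      · -- d = a
        simp only [hb, hc, hd]
        rw [PULL a (fun s => dl a s + dl a s) (fun s => dl a s + dl a s + dl a s + dl a s) (fun s => by ring)]
        simp [DD, dl]
        all_goals push_cast
        all_goals ring
      · -- d ≠ a
        simp only [hb, hc]
        rw [PULL a (fun s => dl a s + dl d s) (fun s => dl a s + dl a s + dl a s + dl d s) (fun s => by ring)]
        simp [DD, dl, Ne.symm hd]
        all_goals push_cast
        all_goals ring
    · -- c ≠ a
      by_cases hd : d = a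
      · -- d = a
        simp only [hb, hd]
        rw [PULL a (fun s => dl c s + dl a s) (fun s => dl a s + dl a s + dl c s + dl a s) (fun s => by ring)]
        rw [show W (fun s => dl a s + dl c s) = W (fun s => dl c s + dl a s) from congrArg W (funext fun s => by ring)]
        simp [DD, dl, Ne.symm hc]
        all_goals push_cast
        all_goals ring
      · -- d ≠ a
        simp only [hb]
        rw [PULL a (fun s => dl c s + dl d s) (fun s => dl a s + dl a s + dl c s + dl d s) (fun s => by ring)]
        simp [DD, dl, Ne.symm hc, Ne.symm hd]
        all_goals push_cast
        all_goals ring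
  · -- b ≠ a
    by_cases hc : c = a
    · -- c = a
      by_cases hd : d = a
      · -- d = a
        simp only [hc, hd]
        rw [PULL a (fun s => dl b s + dl a s) (fun s => dl a s + dl b s + dl a s + dl a s) (fun s => by ring)]
        simp [DD, dl, Ne.symm hb]
        all_goals push_cast
        all_goals ring
      · -- d ≠ a
        simp only [hc]
        rw [PULL a (fun s => dl b s + dl d s) (fun s => dl a s + dl b s + dl a s + dl d s) (fun s => by ring)]
        simp [DD, dl, Ne.symm hb, Ne.symm hd]
        all_goals push_cast
        all_goals ring
    · -- c ≠ a
      by_cases hd : d = a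
      · -- d = a
        simp only [hd]
        rw [PULL a (fun s => dl b s + dl c s) (fun s => dl a s + dl b s + dl c s + dl a s) (fun s => by ring)]
        simp [DD, dl, Ne.symm hb, Ne.symm hc]
        all_goals push_cast
        all_goals ring
      · -- d ≠ a
        rw [Wodd (fun s => dl a s + dl b s + dl c s + dl d s) a 0 (by simp [dl, Ne.symm hb, Ne.symm hc, Ne.symm hd])]
        simp [DD, Ne.symm hb, Ne.symm hc, Ne.symm hd]

lemma W6 (a b c d e f : Fin p) :
    W (fun s => dl a s + dl b s + dl c s + dl d s + dl e s + dl f s)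
      = DD a b * W (fun s => dl c s + dl d s + dl e s + dl f s)
      + DD a c * W (fun s => dl b s + dl d s + dl e s + dl f s)
      + DD a d * W (fun s => dl b s + dl c s + dl e s + dl f s)
      + DD a e * W (fun s => dl b s + dl c s + dl d s + dl f s)
      + DD a f * W (fun s => dl b s + dl c s + dl d s + dl e s) := by
  by_cases hb : b = a
  · -- b = a
    by_cases hc : c = a
    · -- c = a
      by_cases hd : d = a
      · -- d = a
        by_cases he : e = a
        · -- e = a
          by_cases hf : f = a
          · -- f = a
            simp only [hb, hc, hd, he, hf]
            rw [PULL a (fun s => dl a s + dl a s + dl a s + dl a s) (fun s => dl a s + dl a s + dl a s + dl a s + dl a s + dl a s) (fun s => by ring)]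
            simp [DD, dl]
            all_goals push_cast
            all_goals ring
          · -- f ≠ a
            simp only [hb, hc, hd, he]
            rw [PULL a (fun s => dl a s + dl a s + dl a s + dl f s) (fun s => dl a s + dl a s + dl a s + dl a s + dl a s + dl f s) (fun s => by ring)]
            simp [DD, dl, Ne.symm hf]
            all_goals push_cast
            all_goals ring
        · -- e ≠ a
          by_cases hf : f = a
          · -- f = a
            simp only [hb, hc, hd, hf]
            rw [PULL a (fun s => dl a s + dl a s + dl e s + dl a s) (fun s => dl a s + dl a s + dl a s + dl a s + dl e s + dl a s) (fun s => by ring)]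
            rw [show W (fun s => dl a s + dl a s + dl a s + dl e s) = W (fun s => dl a s + dl a s + dl e s + dl a s) from congrArg W (funext fun s => by ring)]
            simp [DD, dl, Ne.symm he]
            all_goals push_cast
            all_goals ring
          · -- f ≠ a
            simp only [hb, hc, hd]
            rw [PULL a (fun s => dl a s + dl a s + dl e s + dl f s) (fun s => dl a s + dl a s + dl a s + dl a s + dl e s + dl f s) (fun s => by ring)]
            simp [DD, dl, Ne.symm he, Ne.symm hf]
            all_goals push_cast
            all_goals ring
      · -- d ≠ a
        by_cases he : e = a
        · -- e = a
          by_cases hf : f = a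
          · -- f = a
            simp only [hb, hc, he, hf]
            rw [PULL a (fun s => dl a s + dl d s + dl a s + dl a s) (fun s => dl a s + dl a s + dl a s + dl d s + dl a s + dl a s) (fun s => by ring)]
            rw [show W (fun s => dl a s + dl a s + dl d s + dl a s) = W (fun s => dl a s + dl d s + dl a s + dl a s) from congrArg W (funext fun s => by ring)]
            simp [DD, dl, Ne.symm hd]
            all_goals push_cast
            all_goals ring
          · -- f ≠ a
            simp only [hb, hc, he]
            rw [PULL a (fun s => dl a s + dl d s + dl a s + dl f s) (fun s => dl a s + dl a s + dl a s + dl d s + dl a s + dl f s) (fun s => by ring)]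
            rw [show W (fun s => dl a s + dl a s + dl d s + dl f s) = W (fun s => dl a s + dl d s + dl a s + dl f s) from congrArg W (funext fun s => by ring)]
            simp [DD, dl, Ne.symm hd, Ne.symm hf]
            all_goals push_cast
            all_goals ring
        · -- e ≠ a
          by_cases hf : f = a
          · -- f = a
            simp only [hb, hc, hf]
            rw [PULL a (fun s => dl a s + dl d s + dl e s + dl a s) (fun s => dl a s + dl a s + dl a s + dl d s + dl e s + dl a s) (fun s => by ring)]
            rw [show W (fun s => dl a s + dl a s + dl d s + dl e s) = W (fun s => dl a s + dl d s + dl e s + dl a s) from congrArg W (funext fun s => by ring)]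
            simp [DD, dl, Ne.symm hd, Ne.symm he]
            all_goals push_cast
            all_goals ring
          · -- f ≠ a
            simp only [hb, hc]
            rw [PULL a (fun s => dl a s + dl d s + dl e s + dl f s) (fun s => dl a s + dl a s + dl a s + dl d s + dl e s + dl f s) (fun s => by ring)]
            simp [DD, dl, Ne.symm hd, Ne.symm he, Ne.symm hf]
            all_goals push_cast
            all_goals ring
    · -- c ≠ a
      by_cases hd : d = a
      · -- d = a
        by_cases he : e = a
        · -- e = a
          by_cases hf : f = a
          · -- f = a
            simp only [hb, hd, he, hf]
            rw [PULL a (fun s => dl c s + dl a s + dl a s + dl a s) (fun s => dl a s + dl a s + dl c s + dl a s + dl a s + dl a s) (fun s => by ring)]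
            rw [show W (fun s => dl a s + dl c s + dl a s + dl a s) = W (fun s => dl c s + dl a s + dl a s + dl a s) from congrArg W (funext fun s => by ring)]
            simp [DD, dl, Ne.symm hc]
            all_goals push_cast
            all_goals ring
          · -- f ≠ a
            simp only [hb, hd, he]
            rw [PULL a (fun s => dl c s + dl a s + dl a s + dl f s) (fun s => dl a s + dl a s + dl c s + dl a s + dl a s + dl f s) (fun s => by ring)]
            rw [show W (fun s => dl a s + dl c s + dl a s + dl f s) = W (fun s => dl c s + dl a s + dl a s + dl f s) from congrArg W (funext fun s => by ring)]
            simp [DD, dl, Ne.symm hc, Ne.symm hf]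
            all_goals push_cast
            all_goals ring
        · -- e ≠ a
          by_cases hf : f = a
          · -- f = a
            simp only [hb, hd, hf]
            rw [PULL a (fun s => dl c s + dl a s + dl e s + dl a s) (fun s => dl a s + dl a s + dl c s + dl a s + dl e s + dl a s) (fun s => by ring)]
            rw [show W (fun s => dl a s + dl c s + dl e s + dl a s) = W (fun s => dl c s + dl a s + dl e s + dl a s) from congrArg W (funext fun s => by ring)]
            rw [show W (fun s => dl a s + dl c s + dl a s + dl e s) = W (fun s => dl c s + dl a s + dl e s + dl a s) from congrArg W (funext fun s => by ring)]
            simp [DD, dl, Ne.symm hc, Ne.symm he]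
            all_goals push_cast
            all_goals ring
          · -- f ≠ a
            simp only [hb, hd]
            rw [PULL a (fun s => dl c s + dl a s + dl e s + dl f s) (fun s => dl a s + dl a s + dl c s + dl a s + dl e s + dl f s) (fun s => by ring)]
            rw [show W (fun s => dl a s + dl c s + dl e s + dl f s) = W (fun s => dl c s + dl a s + dl e s + dl f s) from congrArg W (funext fun s => by ring)]
            simp [DD, dl, Ne.symm hc, Ne.symm he, Ne.symm hf]
            all_goals push_cast
            all_goals ring
      · -- d ≠ a
        by_cases he : e = a
        · -- e = a
          by_cases hf : f = a
          · -- f = a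
            simp only [hb, he, hf]
            rw [PULL a (fun s => dl c s + dl d s + dl a s + dl a s) (fun s => dl a s + dl a s + dl c s + dl d s + dl a s + dl a s) (fun s => by ring)]
            rw [show W (fun s => dl a s + dl c s + dl d s + dl a s) = W (fun s => dl c s + dl d s + dl a s + dl a s) from congrArg W (funext fun s => by ring)]
            simp [DD, dl, Ne.symm hc, Ne.symm hd]
            all_goals push_cast
            all_goals ring
          · -- f ≠ a
            simp only [hb, he]
            rw [PULL a (fun s => dl c s + dl d s + dl a s + dl f s) (fun s => dl a s + dl a s + dl c s + dl d s + dl a s + dl f s) (fun s => by ring)]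
            rw [show W (fun s => dl a s + dl c s + dl d s + dl f s) = W (fun s => dl c s + dl d s + dl a s + dl f s) from congrArg W (funext fun s => by ring)]
            simp [DD, dl, Ne.symm hc, Ne.symm hd, Ne.symm hf]
            all_goals push_cast
            all_goals ring
        · -- e ≠ a
          by_cases hf : f = a
          · -- f = a
            simp only [hb, hf]
            rw [PULL a (fun s => dl c s + dl d s + dl e s + dl a s) (fun s => dl a s + dl a s + dl c s + dl d s + dl e s + dl a s) (fun s => by ring)]
            rw [show W (fun s => dl a s + dl c s + dl d s + dl e s) = W (fun s => dl c s + dl d s + dl e s + dl a s) from congrArg W (funext fun s => by ring)]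
            simp [DD, dl, Ne.symm hc, Ne.symm hd, Ne.symm he]
            all_goals push_cast
            all_goals ring
          · -- f ≠ a
            simp only [hb]
            rw [PULL a (fun s => dl c s + dl d s + dl e s + dl f s) (fun s => dl a s + dl a s + dl c s + dl d s + dl e s + dl f s) (fun s => by ring)]
            simp [DD, dl, Ne.symm hc, Ne.symm hd, Ne.symm he, Ne.symm hf]
            all_goals push_cast
            all_goals ring
  · -- b ≠ a
    by_cases hc : c = a
    · -- c = a
      by_cases hd : d = a
      · -- d = a
        by_cases he : e = a
        · -- e = a
          by_cases hf : f = a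
          · -- f = a
            simp only [hc, hd, he, hf]
            rw [PULL a (fun s => dl b s + dl a s + dl a s + dl a s) (fun s => dl a s + dl b s + dl a s + dl a s + dl a s + dl a s) (fun s => by ring)]
            simp [DD, dl, Ne.symm hb]
            all_goals push_cast
            all_goals ring
          · -- f ≠ a
            simp only [hc, hd, he]
            rw [PULL a (fun s => dl b s + dl a s + dl a s + dl f s) (fun s => dl a s + dl b s + dl a s + dl a s + dl a s + dl f s) (fun s => by ring)]
            simp [DD, dl, Ne.symm hb, Ne.symm hf]
            all_goals push_cast
            all_goals ring
        · -- e ≠ a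
          by_cases hf : f = a
          · -- f = a
            simp only [hc, hd, hf]
            rw [PULL a (fun s => dl b s + dl a s + dl e s + dl a s) (fun s => dl a s + dl b s + dl a s + dl a s + dl e s + dl a s) (fun s => by ring)]
            rw [show W (fun s => dl b s + dl a s + dl a s + dl e s) = W (fun s => dl b s + dl a s + dl e s + dl a s) from congrArg W (funext fun s => by ring)]
            simp [DD, dl, Ne.symm hb, Ne.symm he]
            all_goals push_cast
            all_goals ring
          · -- f ≠ a
            simp only [hc, hd]
            rw [PULL a (fun s => dl b s + dl a s + dl e s + dl f s) (fun s => dl a s + dl b s + dl a s + dl a s + dl e s + dl f s) (fun s => by ring)]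
            simp [DD, dl, Ne.symm hb, Ne.symm he, Ne.symm hf]
            all_goals push_cast
            all_goals ring
      · -- d ≠ a
        by_cases he : e = a
        · -- e = a
          by_cases hf : f = a
          · -- f = a
            simp only [hc, he, hf]
            rw [PULL a (fun s => dl b s + dl d s + dl a s + dl a s) (fun s => dl a s + dl b s + dl a s + dl d s + dl a s + dl a s) (fun s => by ring)]
            rw [show W (fun s => dl b s + dl a s + dl d s + dl a s) = W (fun s => dl b s + dl d s + dl a s + dl a s) from congrArg W (funext fun s => by ring)]
            simp [DD, dl, Ne.symm hb, Ne.symm hd]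
            all_goals push_cast
            all_goals ring
          · -- f ≠ a
            simp only [hc, he]
            rw [PULL a (fun s => dl b s + dl d s + dl a s + dl f s) (fun s => dl a s + dl b s + dl a s + dl d s + dl a s + dl f s) (fun s => by ring)]
            rw [show W (fun s => dl b s + dl a s + dl d s + dl f s) = W (fun s => dl b s + dl d s + dl a s + dl f s) from congrArg W (funext fun s => by ring)]
            simp [DD, dl, Ne.symm hb, Ne.symm hd, Ne.symm hf]
            all_goals push_cast
            all_goals ring
        · -- e ≠ a
          by_cases hf : f = a
          · -- f = a
            simp only [hc, hf]
            rw [PULL a (fun s => dl b s + dl d s + dl e s + dl a s) (fun s => dl a s + dl b s + dl a s + dl d s + dl e s + dl a s) (fun s => by ring)]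
            rw [show W (fun s => dl b s + dl a s + dl d s + dl e s) = W (fun s => dl b s + dl d s + dl e s + dl a s) from congrArg W (funext fun s => by ring)]
            simp [DD, dl, Ne.symm hb, Ne.symm hd, Ne.symm he]
            all_goals push_cast
            all_goals ring
          · -- f ≠ a
            simp only [hc]
            rw [PULL a (fun s => dl b s + dl d s + dl e s + dl f s) (fun s => dl a s + dl b s + dl a s + dl d s + dl e s + dl f s) (fun s => by ring)]
            simp [DD, dl, Ne.symm hb, Ne.symm hd, Ne.symm he, Ne.symm hf]
            all_goals push_cast
            all_goals ring
    · -- c ≠ a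
      by_cases hd : d = a
      · -- d = a
        by_cases he : e = a
        · -- e = a
          by_cases hf : f = a
          · -- f = a
            simp only [hd, he, hf]
            rw [PULL a (fun s => dl b s + dl c s + dl a s + dl a s) (fun s => dl a s + dl b s + dl c s + dl a s + dl a s + dl a s) (fun s => by ring)]
            simp [DD, dl, Ne.symm hb, Ne.symm hc]
            all_goals push_cast
            all_goals ring
          · -- f ≠ a
            simp only [hd, he]
            rw [PULL a (fun s => dl b s + dl c s + dl a s + dl f s) (fun s => dl a s + dl b s + dl c s + dl a s + dl a s + dl f s) (fun s => by ring)]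
            simp [DD, dl, Ne.symm hb, Ne.symm hc, Ne.symm hf]
            all_goals push_cast
            all_goals ring
        · -- e ≠ a
          by_cases hf : f = a
          · -- f = a
            simp only [hd, hf]
            rw [PULL a (fun s => dl b s + dl c s + dl e s + dl a s) (fun s => dl a s + dl b s + dl c s + dl a s + dl e s + dl a s) (fun s => by ring)]
            rw [show W (fun s => dl b s + dl c s + dl a s + dl e s) = W (fun s => dl b s + dl c s + dl e s + dl a s) from congrArg W (funext fun s => by ring)]
            simp [DD, dl, Ne.symm hb, Ne.symm hc, Ne.symm he]
            all_goals push_cast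
            all_goals ring
          · -- f ≠ a
            simp only [hd]
            rw [PULL a (fun s => dl b s + dl c s + dl e s + dl f s) (fun s => dl a s + dl b s + dl c s + dl a s + dl e s + dl f s) (fun s => by ring)]
            simp [DD, dl, Ne.symm hb, Ne.symm hc, Ne.symm he, Ne.symm hf]
            all_goals push_cast
            all_goals ring
      · -- d ≠ a
        by_cases he : e = a
        · -- e = a
          by_cases hf : f = a
          · -- f = a
            simp only [he, hf]
            rw [PULL a (fun s => dl b s + dl c s + dl d s + dl a s) (fun s => dl a s + dl b s + dl c s + dl d s + dl a s + dl a s) (fun s => by ring)]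
            simp [DD, dl, Ne.symm hb, Ne.symm hc, Ne.symm hd]
            all_goals push_cast
            all_goals ring
          · -- f ≠ a
            simp only [he]
            rw [PULL a (fun s => dl b s + dl c s + dl d s + dl f s) (fun s => dl a s + dl b s + dl c s + dl d s + dl a s + dl f s) (fun s => by ring)]
            simp [DD, dl, Ne.symm hb, Ne.symm hc, Ne.symm hd, Ne.symm hf]
            all_goals push_cast
            all_goals ring
        · -- e ≠ a
          by_cases hf : f = a
          · -- f = a
            simp only [hf]
            rw [PULL a (fun s => dl b s + dl c s + dl d s + dl e s) (fun s => dl a s + dl b s + dl c s + dl d s + dl e s + dl a s) (fun s => by ring)]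
            simp [DD, dl, Ne.symm hb, Ne.symm hc, Ne.symm hd, Ne.symm he]
            all_goals push_cast
            all_goals ring
          · -- f ≠ a
            rw [Wodd (fun s => dl a s + dl b s + dl c s + dl d s + dl e s + dl f s) a 0 (by simp [dl, Ne.symm hb, Ne.symm hc, Ne.symm hd, Ne.symm he, Ne.symm hf])]
            simp [DD, Ne.symm hb, Ne.symm hc, Ne.symm hd, Ne.symm he, Ne.symm hf]

end Comb

section Bridge

variable {p : ℕ}

local notation "μp" => (Measure.pi fun _ : Fin p => gaussianReal 0 1)

lemma integral_monomial (c : Fin p → ℕ) :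
    ∫ γ : Fin p → ℝ, ∏ s, γ s ^ c s ∂μp = W c :=
  integral_pi_prod (fun i x => x ^ c i)

lemma integrable_monomial (c : Fin p → ℕ) :
    Integrable (fun γ : Fin p → ℝ => ∏ s, γ s ^ c s) μp :=
  integrable_pi_prod (fun i => integrable_pow_gauss (c i))

lemma prod_pow_dl (γ : Fin p → ℝ) (a : Fin p) :
    (∏ s, γ s ^ dl a s) = γ a := by
  have : ∀ s, γ s ^ dl a s = if s = a then γ s else 1 := by
    intro s
    by_cases h : s = a <;> simp [dl, h]
  simp_rw [this]
  simp

lemma mexp2 (γ : Fin p → ℝ) (a b : Fin p) :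
    γ a * γ b = ∏ s, γ s ^ (dl a s + dl b s) := by
  simp [pow_add, Finset.prod_mul_distrib, prod_pow_dl]

lemma mexp4 (γ : Fin p → ℝ) (a b c d : Fin p) :
    γ a * γ b * γ c * γ d = ∏ s, γ s ^ (dl a s + dl b s + dl c s + dl d s) := by
  simp [pow_add, Finset.prod_mul_distrib, prod_pow_dl]

lemma mexp6 (γ : Fin p → ℝ) (a b c d e f : Fin p) :
    γ a * γ b * γ c * γ d * γ e * γ f
      = ∏ s, γ s ^ (dl a s + dl b s + dl c s + dl d s + dl e s + dl f s) := by
  simp [pow_add, Finset.prod_mul_distrib, prod_pow_dl]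

lemma I2 (a b : Fin p) : ∫ γ : Fin p → ℝ, γ a * γ b ∂μp = DD a b := by
  simp_rw [mexp2]
  rw [integral_monomial, W2]

lemma I4 (a b c d : Fin p) :
    ∫ γ : Fin p → ℝ, γ a * γ b * γ c * γ d ∂μp
      = DD a b * DD c d + DD a c * DD b d + DD a d * DD b c := by
  simp_rw [mexp4]
  rw [integral_monomial, W4]
  simp only [W2]

lemma I6 (a b c d e f : Fin p) :
    ∫ γ : Fin p → ℝ, γ a * γ b * γ c * γ d * γ e * γ f ∂μp
      = DD a b * (DD c d * DD e f + DD c e * DD d f + DD c f * DD d e)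
      + DD a c * (DD b d * DD e f + DD b e * DD d f + DD b f * DD d e)
      + DD a d * (DD b c * DD e f + DD b e * DD c f + DD b f * DD c e)
      + DD a e * (DD b c * DD d f + DD b d * DD c f + DD b f * DD c d)
      + DD a f * (DD b c * DD d e + DD b d * DD c e + DD b e * DD c d) := by
  simp_rw [mexp6]
  rw [integral_monomial, W6]
  simp only [W4, W2]

lemma intg2 (a b : Fin p) :
    Integrable (fun γ : Fin p → ℝ => γ a * γ b) μp :=
  (integrable_monomial _).congr
    (Filter.Eventually.of_forall fun γ => (mexp2 γ a b).symm)

lemma intg4 (a b c d : Fin p) :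
    Integrable (fun γ : Fin p → ℝ => γ a * γ b * γ c * γ d) μp :=
  (integrable_monomial _).congr
    (Filter.Eventually.of_forall fun γ => (mexp4 γ a b c d).symm)

lemma intg6 (a b c d e f : Fin p) :
    Integrable (fun γ : Fin p → ℝ => γ a * γ b * γ c * γ d * γ e * γ f) μp :=
  (integrable_monomial _).congr
    (Filter.Eventually.of_forall fun γ => (mexp6 γ a b c d e f).symm)

lemma integrable_sum' {ι : Type*} [Fintype ι] (f : ι → (Fin p → ℝ) → ℝ)
    (hf : ∀ i, Integrable (f i) μp) :
    Integrable (fun γ => ∑ i, f i γ) μp :=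
  integrable_finset_sum _ (fun i _ => hf i)

lemma integral_sum' {ι : Type*} [Fintype ι] (f : ι → (Fin p → ℝ) → ℝ)
    (hf : ∀ i, Integrable (f i) μp) :
    ∫ γ, ∑ i, f i γ ∂μp = ∑ i, ∫ γ, f i γ ∂μp :=
  integral_finset_sum _ (fun i _ => hf i)

end Bridge

section Main

set_option maxHeartbeats 2000000

/-- For every symmetric 3-tensor `T` on `ℝ^p`,
`E[(T(γ) − 3⟨M,γ⟩)²] = 6‖T‖_Fr²` where `γ` is a standard Gaussian vector,
`M i = tr(T_i) = ∑ j, T i j j` and `‖T‖_Fr² = ∑ i j k, (T i j k)²`. -/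
theorem gaussian_tensor_centered_second_moment
    (p : ℕ) (T : Fin p → Fin p → Fin p → ℝ)
    (hsym : ∀ i j k, T i j k = T j i k ∧ T i j k = T i k j) :
    ∫ γ : Fin p → ℝ,
        ((∑ i, ∑ j, ∑ k, T i j k * γ i * γ j * γ k)
            - 3 * ∑ i, (∑ j, T i j j) * γ i) ^ 2
        ∂(Measure.pi fun _ : Fin p => gaussianReal 0 1)
      = 6 * ∑ i, ∑ j, ∑ k, (T i j k) ^ 2 := by
  have ig6 : ∀ i j k l m n : Fin p, Integrable
      (fun γ : Fin p → ℝ => T i j k * T l m n * (γ i * γ j * γ k * γ l * γ m * γ n))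
      (Measure.pi fun _ : Fin p => gaussianReal 0 1) :=
    fun i j k l m n => (intg6 i j k l m n).const_mul _
  have ig4 : ∀ i j k l : Fin p, Integrable
      (fun γ : Fin p → ℝ => T i j k * (∑ j', T l j' j') * (γ i * γ j * γ k * γ l))
      (Measure.pi fun _ : Fin p => gaussianReal 0 1) :=
    fun i j k l => (intg4 i j k l).const_mul _
  have ig2 : ∀ i j : Fin p, Integrable
      (fun γ : Fin p → ℝ => (∑ j', T i j' j') * (∑ j', T j j' j') * (γ i * γ j))
      (Measure.pi fun _ : Fin p => gaussianReal 0 1) :=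
    fun i j => (intg2 i j).const_mul _
  have ig6s : ∀ i j k l m : Fin p, Integrable
      (fun γ : Fin p → ℝ => ∑ n, T i j k * T l m n * (γ i * γ j * γ k * γ l * γ m * γ n)) _ :=
    fun i j k l m => integrable_sum' _ (fun n => ig6 i j k l m n)
  have ig6s2 : ∀ i j k l : Fin p, Integrable
      (fun γ : Fin p → ℝ => ∑ m, ∑ n, T i j k * T l m n * (γ i * γ j * γ k * γ l * γ m * γ n)) _ :=
    fun i j k l => integrable_sum' _ (fun m => ig6s i j k l m)
  have ig6s3 : ∀ i j k : Fin p, Integrable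
      (fun γ : Fin p → ℝ => ∑ l, ∑ m, ∑ n, T i j k * T l m n * (γ i * γ j * γ k * γ l * γ m * γ n)) _ :=
    fun i j k => integrable_sum' _ (fun l => ig6s2 i j k l)
  have ig6s4 : ∀ i j : Fin p, Integrable
      (fun γ : Fin p → ℝ => ∑ k, ∑ l, ∑ m, ∑ n, T i j k * T l m n * (γ i * γ j * γ k * γ l * γ m * γ n)) _ :=
    fun i j => integrable_sum' _ (fun k => ig6s3 i j k)
  have ig6s5 : ∀ i : Fin p, Integrable
      (fun γ : Fin p → ℝ => ∑ j, ∑ k, ∑ l, ∑ m, ∑ n, T i j k * T l m n * (γ i * γ j * γ k * γ l * γ m * γ n)) _ :=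
    fun i => integrable_sum' _ (fun j => ig6s4 i j)
  have ig6s6 : Integrable
      (fun γ : Fin p → ℝ => ∑ i, ∑ j, ∑ k, ∑ l, ∑ m, ∑ n, T i j k * T l m n * (γ i * γ j * γ k * γ l * γ m * γ n)) _ :=
    integrable_sum' _ (fun i => ig6s5 i)
  have ig4s : ∀ i j k : Fin p, Integrable
      (fun γ : Fin p → ℝ => ∑ l, T i j k * (∑ j', T l j' j') * (γ i * γ j * γ k * γ l)) _ :=
    fun i j k => integrable_sum' _ (fun l => ig4 i j k l)
  have ig4s2 : ∀ i j : Fin p, Integrable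
      (fun γ : Fin p → ℝ => ∑ k, ∑ l, T i j k * (∑ j', T l j' j') * (γ i * γ j * γ k * γ l)) _ :=
    fun i j => integrable_sum' _ (fun k => ig4s i j k)
  have ig4s3 : ∀ i : Fin p, Integrable
      (fun γ : Fin p → ℝ => ∑ j, ∑ k, ∑ l, T i j k * (∑ j', T l j' j') * (γ i * γ j * γ k * γ l)) _ :=
    fun i => integrable_sum' _ (fun j => ig4s2 i j)
  have ig4s4 : Integrable
      (fun γ : Fin p → ℝ => ∑ i, ∑ j, ∑ k, ∑ l, T i j k * (∑ j', T l j' j') * (γ i * γ j * γ k * γ l)) _ :=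
    integrable_sum' _ (fun i => ig4s3 i)
  have ig2s : ∀ i : Fin p, Integrable
      (fun γ : Fin p → ℝ => ∑ j, (∑ j', T i j' j') * (∑ j', T j j' j') * (γ i * γ j)) _ :=
    fun i => integrable_sum' _ (fun j => ig2 i j)
  have ig2s2 : Integrable
      (fun γ : Fin p → ℝ => ∑ i, ∑ j, (∑ j', T i j' j') * (∑ j', T j j' j') * (γ i * γ j)) _ :=
    integrable_sum' _ (fun i => ig2s i)
  have key : ∀ γ : Fin p → ℝ,
      ((∑ i, ∑ j, ∑ k, T i j k * γ i * γ j * γ k)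
          - 3 * ∑ i, (∑ j, T i j j) * γ i) ^ 2
        = (∑ i, ∑ j, ∑ k, ∑ l, ∑ m, ∑ n,
            T i j k * T l m n * (γ i * γ j * γ k * γ l * γ m * γ n))
          - 6 * (∑ i, ∑ j, ∑ k, ∑ l,
            T i j k * (∑ j', T l j' j') * (γ i * γ j * γ k * γ l))
          + 9 * (∑ i, ∑ j, (∑ j', T i j' j') * (∑ j', T j j' j') * (γ i * γ j)) := by
    intro γ
    have h2 : (∑ i, ∑ j, ∑ k, T i j k * γ i * γ j * γ k)
        * (∑ i, ∑ j, ∑ k, T i j k * γ i * γ j * γ k)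
        = ∑ i, ∑ j, ∑ k, ∑ l, ∑ m, ∑ n,
            T i j k * T l m n * (γ i * γ j * γ k * γ l * γ m * γ n) := by
      rw [Finset.sum_mul]; refine Finset.sum_congr rfl fun i _ => ?_
      rw [Finset.sum_mul]; refine Finset.sum_congr rfl fun j _ => ?_
      rw [Finset.sum_mul]; refine Finset.sum_congr rfl fun k _ => ?_
      rw [Finset.mul_sum]; refine Finset.sum_congr rfl fun l _ => ?_
      rw [Finset.mul_sum]; refine Finset.sum_congr rfl fun m _ => ?_
      rw [Finset.mul_sum]; refine Finset.sum_congr rfl fun n _ => ?_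
      ring
    have h1 : (∑ i, ∑ j, ∑ k, T i j k * γ i * γ j * γ k)
        * (∑ i, (∑ j, T i j j) * γ i)
        = ∑ i, ∑ j, ∑ k, ∑ l,
            T i j k * (∑ j', T l j' j') * (γ i * γ j * γ k * γ l) := by
      rw [Finset.sum_mul]; refine Finset.sum_congr rfl fun i _ => ?_
      rw [Finset.sum_mul]; refine Finset.sum_congr rfl fun j _ => ?_
      rw [Finset.sum_mul]; refine Finset.sum_congr rfl fun k _ => ?_
      rw [Finset.mul_sum]; refine Finset.sum_congr rfl fun l _ => ?_
      ring
    have h0 : (∑ i, (∑ j, T i j j) * γ i) * (∑ i, (∑ j, T i j j) * γ i)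
        = ∑ i, ∑ j, (∑ j', T i j' j') * (∑ j', T j j' j') * (γ i * γ j) := by
      rw [Finset.sum_mul]; refine Finset.sum_congr rfl fun i _ => ?_
      rw [Finset.mul_sum]; refine Finset.sum_congr rfl fun j _ => ?_
      ring
    have hr : ∀ x y : ℝ, (x - 3*y)^2 = x*x - 6*(x*y) + 9*(y*y) := by intros; ring
    rw [hr, h2, h1, h0]
  simp only [key]
  have hintB : Integrable (fun γ : Fin p → ℝ =>
      6 * ∑ i, ∑ j, ∑ k, ∑ l, T i j k * (∑ j', T l j' j') * (γ i * γ j * γ k * γ l))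
      (Measure.pi fun _ : Fin p => gaussianReal 0 1) := ig4s4.const_mul 6
  have hintC : Integrable (fun γ : Fin p → ℝ =>
      9 * ∑ i, ∑ j, (∑ j', T i j' j') * (∑ j', T j j' j') * (γ i * γ j))
      (Measure.pi fun _ : Fin p => gaussianReal 0 1) := ig2s2.const_mul 9
  have hintAB : Integrable (fun γ : Fin p → ℝ =>
      (∑ i, ∑ j, ∑ k, ∑ l, ∑ m, ∑ n,
        T i j k * T l m n * (γ i * γ j * γ k * γ l * γ m * γ n))
      - 6 * ∑ i, ∑ j, ∑ k, ∑ l, T i j k * (∑ j', T l j' j') * (γ i * γ j * γ k * γ l))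
      (Measure.pi fun _ : Fin p => gaussianReal 0 1) := ig6s6.sub hintB
  rw [integral_add hintAB hintC, integral_sub ig6s6 hintB,
      MeasureTheory.integral_const_mul 6, MeasureTheory.integral_const_mul 9]
  have hF2 : ∫ γ : Fin p → ℝ, (∑ i, ∑ j, ∑ k, ∑ l, ∑ m, ∑ n,
        T i j k * T l m n * (γ i * γ j * γ k * γ l * γ m * γ n))
        ∂(Measure.pi fun _ : Fin p => gaussianReal 0 1)
      = ∑ i, ∑ j, ∑ k, ∑ l, ∑ m, ∑ n, T i j k * T l m n *
          (DD i j * (DD k l * DD m n + DD k m * DD l n + DD k n * DD l m)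
          + DD i k * (DD j l * DD m n + DD j m * DD l n + DD j n * DD l m)
          + DD i l * (DD j k * DD m n + DD j m * DD k n + DD j n * DD k m)
          + DD i m * (DD j k * DD l n + DD j l * DD k n + DD j n * DD k l)
          + DD i n * (DD j k * DD l m + DD j l * DD k m + DD j m * DD k l)) := by
    rw [integral_sum' _ ig6s5]; refine Finset.sum_congr rfl fun i _ => ?_
    rw [integral_sum' _ (fun j => ig6s4 i j)]; refine Finset.sum_congr rfl fun j _ => ?_
    rw [integral_sum' _ (fun k => ig6s3 i j k)]; refine Finset.sum_congr rfl fun k _ => ?_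
    rw [integral_sum' _ (fun l => ig6s2 i j k l)]; refine Finset.sum_congr rfl fun l _ => ?_
    rw [integral_sum' _ (fun m => ig6s i j k l m)]; refine Finset.sum_congr rfl fun m _ => ?_
    rw [integral_sum' _ (fun n => ig6 i j k l m n)]; refine Finset.sum_congr rfl fun n _ => ?_
    rw [MeasureTheory.integral_const_mul, I6]
  have hF1 : ∫ γ : Fin p → ℝ, (∑ i, ∑ j, ∑ k, ∑ l,
        T i j k * (∑ j', T l j' j') * (γ i * γ j * γ k * γ l))
        ∂(Measure.pi fun _ : Fin p => gaussianReal 0 1)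
      = ∑ i, ∑ j, ∑ k, ∑ l, T i j k * (∑ j', T l j' j') *
          (DD i j * DD k l + DD i k * DD j l + DD i l * DD j k) := by
    rw [integral_sum' _ ig4s3]; refine Finset.sum_congr rfl fun i _ => ?_
    rw [integral_sum' _ (fun j => ig4s2 i j)]; refine Finset.sum_congr rfl fun j _ => ?_
    rw [integral_sum' _ (fun k => ig4s i j k)]; refine Finset.sum_congr rfl fun k _ => ?_
    rw [integral_sum' _ (fun l => ig4 i j k l)]; refine Finset.sum_congr rfl fun l _ => ?_
    rw [MeasureTheory.integral_const_mul, I4]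
  have hF0 : ∫ γ : Fin p → ℝ, (∑ i, ∑ j,
        (∑ j', T i j' j') * (∑ j', T j j' j') * (γ i * γ j))
        ∂(Measure.pi fun _ : Fin p => gaussianReal 0 1)
      = ∑ i, ∑ j, (∑ j', T i j' j') * (∑ j', T j j' j') * DD i j := by
    rw [integral_sum' _ ig2s]; refine Finset.sum_congr rfl fun i _ => ?_
    rw [integral_sum' _ (fun j => ig2 i j)]; refine Finset.sum_congr rfl fun j _ => ?_
    rw [MeasureTheory.integral_const_mul, I2]
  rw [hF2, hF1, hF0]
  have c1 : ∀ a b c, T a c b = T a b c := fun a b c => (hsym a b c).2.symm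
  have c2 : ∀ a b c, T b a c = T a b c := fun a b c => (hsym a b c).1.symm
  have c3 : ∀ a b c, T c a b = T a b c := fun a b c => ((hsym a c b).1.symm).trans (c1 a b c)
  have c4 : ∀ a b c, T b c a = T a b c := fun a b c => ((hsym b a c).2.symm).trans (c2 a b c)
  have c5 : ∀ a b c, T c b a = T a b c := fun a b c => ((hsym b c a).1.symm).trans (c4 a b c)
  have q1 : ∀ a b, T a a b = T b a a := fun a b => c4 b a a
  have q2 : ∀ a b, T a b a = T b a a := fun a b => c2 b a a
  have r1 : ∀ b c, T c b c = T b c c := fun b c => c2 b c c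
  have r2 : ∀ b c, T c c b = T b c c := fun b c => c5 b c c
  have r3 : ∀ a c, T c a c = T a c c := fun a c => c2 a c c
  have r4 : ∀ a c, T c c a = T a c c := fun a c => c4 a c c
  have t01 : (∑ a, ∑ b, ∑ c, T a a b * T b c c) = ∑ a, ∑ b, ∑ c, T a b b * T a c c := by
    rw [Finset.sum_comm]
    refine Finset.sum_congr rfl fun u _ => Finset.sum_congr rfl fun v _ =>
      Finset.sum_congr rfl fun c _ => ?_
    rw [q1 v u]
  have t02 : (∑ a, ∑ b, ∑ c, T a a b * T c b c) = ∑ a, ∑ b, ∑ c, T a b b * T a c c := by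
    rw [Finset.sum_comm]
    refine Finset.sum_congr rfl fun u _ => Finset.sum_congr rfl fun v _ =>
      Finset.sum_congr rfl fun c _ => ?_
    rw [q1 v u, r1 u c]
  have t03 : (∑ a, ∑ b, ∑ c, T a a b * T c c b) = ∑ a, ∑ b, ∑ c, T a b b * T a c c := by
    rw [Finset.sum_comm]
    refine Finset.sum_congr rfl fun u _ => Finset.sum_congr rfl fun v _ =>
      Finset.sum_congr rfl fun c _ => ?_
    rw [q1 v u, r2 u c]
  have t04 : (∑ a, ∑ b, ∑ c, T a b a * T b c c) = ∑ a, ∑ b, ∑ c, T a b b * T a c c := by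
    rw [Finset.sum_comm]
    refine Finset.sum_congr rfl fun u _ => Finset.sum_congr rfl fun v _ =>
      Finset.sum_congr rfl fun c _ => ?_
    rw [q2 v u]
  have t05 : (∑ a, ∑ b, ∑ c, T a b a * T c b c) = ∑ a, ∑ b, ∑ c, T a b b * T a c c := by
    rw [Finset.sum_comm]
    refine Finset.sum_congr rfl fun u _ => Finset.sum_congr rfl fun v _ =>
      Finset.sum_congr rfl fun c _ => ?_
    rw [q2 v u, r1 u c]
  have t06 : (∑ a, ∑ b, ∑ c, T a b a * T c c b) = ∑ a, ∑ b, ∑ c, T a b b * T a c c := by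
    rw [Finset.sum_comm]
    refine Finset.sum_congr rfl fun u _ => Finset.sum_congr rfl fun v _ =>
      Finset.sum_congr rfl fun c _ => ?_
    rw [q2 v u, r2 u c]
  have t10 : (∑ a, ∑ b, ∑ c, T a b b * T c a c) = ∑ a, ∑ b, ∑ c, T a b b * T a c c := by
    refine Finset.sum_congr rfl fun a _ => Finset.sum_congr rfl fun b _ =>
      Finset.sum_congr rfl fun c _ => ?_
    rw [r3 a c]
  have t13 : (∑ a, ∑ b, ∑ c, T a b b * T c c a) = ∑ a, ∑ b, ∑ c, T a b b * T a c c := by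
    refine Finset.sum_congr rfl fun a _ => Finset.sum_congr rfl fun b _ =>
      Finset.sum_congr rfl fun c _ => ?_
    rw [r4 a c]
  have t09 : (∑ a, ∑ b, ∑ c, T a b c * T a c b) = ∑ a, ∑ b, ∑ c, T a b c * T a b c := by
    refine Finset.sum_congr rfl fun a _ => Finset.sum_congr rfl fun b _ =>
      Finset.sum_congr rfl fun c _ => ?_
    rw [c1 a b c]
  have t11 : (∑ a, ∑ b, ∑ c, T a b c * T b a c) = ∑ a, ∑ b, ∑ c, T a b c * T a b c := by
    refine Finset.sum_congr rfl fun a _ => Finset.sum_congr rfl fun b _ =>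
      Finset.sum_congr rfl fun c _ => ?_
    rw [c2 a b c]
  have t12 : (∑ a, ∑ b, ∑ c, T a b c * T c a b) = ∑ a, ∑ b, ∑ c, T a b c * T a b c := by
    refine Finset.sum_congr rfl fun a _ => Finset.sum_congr rfl fun b _ =>
      Finset.sum_congr rfl fun c _ => ?_
    rw [c3 a b c]
  have t14 : (∑ a, ∑ b, ∑ c, T a b c * T b c a) = ∑ a, ∑ b, ∑ c, T a b c * T a b c := by
    refine Finset.sum_congr rfl fun a _ => Finset.sum_congr rfl fun b _ =>
      Finset.sum_congr rfl fun c _ => ?_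
    rw [c4 a b c]
  have t15 : (∑ a, ∑ b, ∑ c, T a b c * T c b a) = ∑ a, ∑ b, ∑ c, T a b c * T a b c := by
    refine Finset.sum_congr rfl fun a _ => Finset.sum_congr rfl fun b _ =>
      Finset.sum_congr rfl fun c _ => ?_
    rw [c5 a b c]
  have tC : (∑ a, ∑ b, ∑ c, T a c c * T a b b) = ∑ a, ∑ b, ∑ c, T a b b * T a c c := by
    refine Finset.sum_congr rfl fun a _ => Finset.sum_congr rfl fun b _ =>
      Finset.sum_congr rfl fun c _ => ?_
    ring
  have pullc : ∀ (r : ℝ) (f : Fin p → Fin p → Fin p → ℝ),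
      (∑ a, ∑ b, ∑ c, r * f a b c) = r * ∑ a, ∑ b, ∑ c, f a b c := by
    intro r f
    rw [Finset.mul_sum]
    refine Finset.sum_congr rfl fun a _ => ?_
    rw [Finset.mul_sum]
    refine Finset.sum_congr rfl fun b _ => ?_
    rw [Finset.mul_sum]
  simp [DD, mul_ite, ite_mul, mul_zero, zero_mul, mul_one, one_mul, mul_add, add_mul,
    Finset.sum_add_distrib, Finset.sum_ite_eq, Finset.sum_ite_eq', Finset.mul_sum,
    Finset.sum_mul]
  rw [pullc 6 (fun a b c => T a a b * T b c c), pullc 6 (fun a b c => T a b a * T b c c),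
      pullc 6 (fun a b c => T a b b * T a c c), pullc 9 (fun a b c => T a c c * T a b b),
      pullc 6 (fun a b c => T a b c ^ 2)]
  rw [t01, t02, t03, t04, t05, t06, t09, t10, t11, t12, t13, t14, t15, tC]
  simp only [pow_two]
  ring

end Main
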